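/- arXiv:2401.03714 — 10 statements merged into one kernel-verified Lean document; each statement's English description precedes it below -/
import Mathlib

section
/- Let u_K, u_L ∈ ℝ with jump j := u_L − u_K ≠ 0, and let g_K, g_L ∈ co{0, j} be minmod-admissible slopes. Set r⁻ := u_K + g_K/2 and r⁺ := u_L − g_L/2, and define the entropy-dissipation coefficient D := (f^EC(u_K, u_L) − f^God(r⁻, r⁺)) / j. Then j/24 ≤ D ≤ (1/12)·|j| + (7/8)·max(|u_K|, |u_L|). -/
/-- Second-order entropy-conservative numerical flux for the Burgers equation. -/
noncomputable def fEC (a b : ℝ) : ℝ := (1/24) * (12 * ((a + b)/2)^2 + (b - a)^2)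

/-- Godunov flux for the Burgers equation. -/
noncomputable def fGod (a b : ℝ) : ℝ := (1/2) * max ((max a 0)^2) ((min b 0)^2)

set_option maxHeartbeats 1000000 in
theorem stmt_0 (uK uL j : ℝ) (hj : j = uL - uK) (hjne : j ≠ 0)
    (gK gL : ℝ)
    (hgK : gK ∈ Set.Icc (min 0 j) (max 0 j))
    (hgL : gL ∈ Set.Icc (min 0 j) (max 0 j))
    (rm rp : ℝ) (hrm : rm = uK + gK / 2) (hrp : rp = uL - gL / 2)
    (D : ℝ) (hD : D = (fEC uK uL - fGod rm rp) / j) :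
    j / 24 ≤ D ∧ D ≤ (1/12) * |j| + (7/8) * max |uK| |uL| := by
  subst hj hrm hrp hD
  simp only [fEC, fGod]
  set m : ℝ := (uK + uL) / 2 with hm
  set M : ℝ := max |uK| |uL| with hMdef
  have hKM : |uK| ≤ M := le_max_left _ _
  have hLM : |uL| ≤ M := le_max_right _ _
  have hM0 : (0:ℝ) ≤ M := le_trans (abs_nonneg uK) hKM
  have hKM' := abs_le.mp hKM
  have hLM' := abs_le.mp hLM
  set x : ℝ := max (uK + gK / 2) 0 with hx
  set y : ℝ := min (uL - gL / 2) 0 with hy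
  have hx0 : 0 ≤ x := le_max_right _ _
  have hy0 : y ≤ 0 := min_le_right _ _
  have hxrm : uK + gK / 2 ≤ x := le_max_left _ _
  have hyrp : y ≤ uL - gL / 2 := min_le_left _ _
  set T : ℝ := max (x ^ 2) (y ^ 2) with hT
  have hTx : x ^ 2 ≤ T := le_max_left _ _
  have hTy : y ^ 2 ≤ T := le_max_right _ _
  have hT0 : 0 ≤ T := le_trans (sq_nonneg x) hTx
  rcases hjne.lt_or_gt with h | h
  · -- uL - uK < 0
    rw [min_eq_right (by linarith : uL - uK ≤ 0), max_eq_left (by linarith : uL - uK ≤ 0)] at hgK hgL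
    obtain ⟨hgK1, hgK2⟩ := hgK
    obtain ⟨hgL1, hgL2⟩ := hgL
    have hrm_ge : m ≤ uK + gK / 2 := by rw [hm]; linarith
    have hrm_le : uK + gK / 2 ≤ uK := by linarith
    have hrp_le : uL - gL / 2 ≤ m := by rw [hm]; linarith
    have hrp_ge : uL ≤ uL - gL / 2 := by linarith
    -- T ≥ m^2
    have hGge : m ^ 2 ≤ T := by
      rcases le_total 0 m with hm0 | hm0
      · have hxm : m ≤ x := le_trans hrm_ge hxrm
        nlinarith
      · have hym : y ≤ m := le_trans hyrp hrp_le
        nlinarith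
    -- T ≤ M^2
    have hGle : T ≤ M ^ 2 := by
      have h1 : x ^ 2 ≤ M ^ 2 := by
        have hxM : x ≤ M := max_le (by linarith [hKM'.2]) hM0
        nlinarith
      have h2 : y ^ 2 ≤ M ^ 2 := by
        have hyM : -M ≤ y := le_min (by linarith [hLM'.1]) (by linarith)
        nlinarith
      exact max_le h1 h2
    -- M^2 - m^2 ≤ M * (uK - uL)
    have hQ : M ^ 2 - m ^ 2 ≤ M * (uK - uL) := by
      have hmM : m ≤ M := by rw [hm]; linarith [hKM'.2, hLM'.2]
      have hmM' : -M ≤ m := by rw [hm]; linarith [hKM'.1, hLM'.1]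
      rcases max_choice |uK| |uL| with hc | hc
      · have hM2 : M ^ 2 = uK ^ 2 := by rw [hMdef, hc, sq_abs]
        have hid : uK ^ 2 - m ^ 2 = ((uK - uL) / 2) * (uK + m) := by rw [hm]; ring
        have hp : (0:ℝ) ≤ (uK - uL) * (2 * M - uK - m) :=
          mul_nonneg (by linarith) (by linarith [hKM'.2])
        nlinarith
      · have hM2 : M ^ 2 = uL ^ 2 := by rw [hMdef, hc, sq_abs]
        have hid : uL ^ 2 - m ^ 2 = ((uL - uK) / 2) * (uL + m) := by rw [hm]; ring
        have hp : (0:ℝ) ≤ (uK - uL) * (uL + m + 2 * M) :=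
          mul_nonneg (by linarith) (by linarith [hLM'.1])
        nlinarith
    constructor
    · rw [le_div_iff_of_neg h]
      nlinarith
    · rw [abs_of_neg h, div_le_iff_of_neg h]
      nlinarith [mul_nonneg hM0 (by linarith : (0:ℝ) ≤ uK - uL), sq_nonneg (uL - uK)]
  · -- 0 < uL - uK
    rw [min_eq_left (by linarith : (0:ℝ) ≤ uL - uK), max_eq_right (by linarith : (0:ℝ) ≤ uL - uK)] at hgK hgL
    obtain ⟨hgK1, hgK2⟩ := hgK
    obtain ⟨hgL1, hgL2⟩ := hgL
    have hrm_le : uK + gK / 2 ≤ m := by rw [hm]; linarith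
    have hrp_ge : m ≤ uL - gL / 2 := by rw [hm]; linarith
    -- T ≤ m^2
    have hGle : T ≤ m ^ 2 := by
      have h1 : x ^ 2 ≤ m ^ 2 := by
        rcases le_total (uK + gK / 2) 0 with hc | hc
        · rw [hx, max_eq_right hc]; simpa using sq_nonneg m
        · rw [hx, max_eq_left hc]; nlinarith
      have h2 : y ^ 2 ≤ m ^ 2 := by
        rcases le_total (uL - gL / 2) 0 with hc | hc
        · rw [hy, min_eq_left hc]; nlinarith
        · rw [hy, min_eq_right hc]; simpa using sq_nonneg m
      exact max_le h1 h2
    -- m^2 - T ≤ M * (uL - uK)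
    have hkey : m ^ 2 - T ≤ M * (uL - uK) := by
      rcases le_total 0 m with hm0 | hm0
      · have hxm : x ≤ m := max_le hrm_le hm0
        have hmM : m ≤ M := by rw [hm]; linarith [hKM'.2, hLM'.2]
        have h1 : m - x ≤ (uL - uK) / 2 := by
          have := hxrm; rw [hm] at *; linarith
        have hp1 : (0:ℝ) ≤ ((uL - uK) / 2 - (m - x)) * (m + x) :=
          mul_nonneg (by linarith) (by linarith)
        have hp2 : (0:ℝ) ≤ (uL - uK) * (2 * M - m - x) :=
          mul_nonneg (by linarith) (by linarith)
        nlinarith [hTx]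
      · have hym : m ≤ y := le_min hrp_ge hm0
        have hmM : -M ≤ m := by rw [hm]; linarith [hKM'.1, hLM'.1]
        have h1 : y - m ≤ (uL - uK) / 2 := by
          have := hyrp; rw [hm] at *; linarith
        have hp1 : (0:ℝ) ≤ ((uL - uK) / 2 - (y - m)) * (-(m + y)) :=
          mul_nonneg (by linarith) (by linarith)
        have hp2 : (0:ℝ) ≤ (uL - uK) * (2 * M + m + y) :=
          mul_nonneg (by linarith) (by linarith)
        nlinarith [hTy]
    constructor
    · rw [le_div_iff₀ h]
      nlinarith
    · rw [abs_of_pos h, div_le_iff₀ h]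
      nlinarith [mul_nonneg hM0 (by linarith : (0:ℝ) ≤ uL - uK), sq_nonneg (uL - uK)]
end

section
/- (Shock case with positive reconstructed average.) Let λ ∈ (0,1], μ ∈ ℝ, j < 0 and A > 0 satisfy 2·|μ−1|·A ≤ −min(λ, 1−λ)·j. Define D := λ·A/2 + ((μ²−1)/2)·A²/j + ((1−3λ²)/24)·j. Then j/24 ≤ D ≤ (3/4)·A + |j|/12. -/
set_option maxHeartbeats 1000000 in
theorem stmt_1 (lam mu j A : ℝ)
    (hlam : lam ∈ Set.Ioc (0:ℝ) 1)
    (hj : j < 0) (hA : 0 < A)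
    (hadm : 2 * |mu - 1| * A ≤ -(min lam (1 - lam)) * j)
    (D : ℝ)
    (hD : D = lam * A / 2 + ((mu^2 - 1)/2) * A^2 / j + ((1 - 3 * lam^2)/24) * j) :
    j / 24 ≤ D ∧ D ≤ (3/4) * A + |j| / 12 := by
  obtain ⟨hl0, hl1⟩ := hlam
  set m := min lam (1 - lam) with hm
  have hm1 : m ≤ lam := min_le_left _ _
  have hm2 : m ≤ 1 - lam := min_le_right _ _
  have hm0 : 0 ≤ m := le_min hl0.le (by linarith)
  have hjne : j ≠ 0 := ne_of_lt hj
  have habs : |mu - 1| ≥ mu - 1 := le_abs_self _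
  have habs' : |mu - 1| ≥ -(mu - 1) := neg_le_abs _
  have habs0 : 0 ≤ |mu - 1| := abs_nonneg _
  have hsq : (2 * |mu - 1| * A) * (2 * |mu - 1| * A) ≤ (-m * j) * (-m * j) :=
    mul_self_le_mul_self (by positivity) hadm
  have hsq' : 4 * (mu - 1)^2 * A^2 ≤ m^2 * j^2 := by
    nlinarith [sq_abs (mu - 1)]
  have hDj : D * j = lam * A / 2 * j + ((mu^2 - 1)/2) * A^2 + ((1 - 3 * lam^2)/24) * j^2 := by
    rw [hD]; field_simp
  have hjabs : |j| = -j := abs_of_neg hj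
  constructor
  · rw [← sub_nonneg]
    have key : (D - j / 24) * (-j) ≥ 0 := by
      nlinarith [mul_nonneg (mul_nonneg (sub_nonneg.2 hm1) hA.le) (by linarith : (0:ℝ) ≤ -j),
        mul_nonneg (mul_nonneg (by nlinarith : (0:ℝ) ≤ lam^2 - m^2) (sq_nonneg j)) (by norm_num : (0:ℝ) ≤ (1:ℝ)),
        mul_le_mul_of_nonneg_right hadm hA.le, sq_nonneg (mu - 1), sq_nonneg j]
    nlinarith [key]
  · rw [← sub_nonneg, hjabs]
    have hexp : -(D*j) = lam*A*(-j)/2 - (mu-1)^2*A^2/2 - (mu-1)*A^2 + ((3*lam^2-1)/24)*j^2 := by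
      rw [hDj]; ring
    have h1 : -(mu-1)*A^2 ≤ m*(-j)*A/2 := by
      have ht := mul_le_mul_of_nonneg_right hadm (by positivity : (0:ℝ) ≤ A/2)
      have ha : -(mu-1)*A^2 ≤ |mu - 1| * A^2 := mul_le_mul_of_nonneg_right habs' (sq_nonneg A)
      have hb : 2 * |mu - 1| * A * (A/2) = |mu - 1| * A^2 := by ring
      have hc : -m*j*(A/2) = m*(-j)*A/2 := by ring
      linarith
    have h2 : 0 ≤ (mu-1)^2*A^2/2 := by positivity
    have hjpos : 0 < -j := by linarith
    have hAj : 0 ≤ A*(-j) := mul_nonneg hA.le hjpos.le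
    have h3 : lam*A*(-j)/2 + m*(-j)*A/2 ≤ A*(-j)/2 := by
      have hc : (lam+m)/2 ≤ 1/2 := by linarith
      have hmm := mul_le_mul_of_nonneg_right hc hAj
      have he : (lam+m)/2 * (A*(-j)) = lam*A*(-j)/2 + m*(-j)*A/2 := by ring
      linarith
    have h4 : ((3*lam^2-1)/24)*j^2 ≤ j^2/12 := by
      have hl2 : lam^2 ≤ 1 := by nlinarith
      have hc : (3*lam^2-1)/24 ≤ 1/12 := by linarith
      have hmm := mul_le_mul_of_nonneg_right hc (sq_nonneg j)
      linarith
    have key : (0:ℝ)*(-j) ≤ (3/4*A + -j/12 - D)*(-j) := by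
      have keyeq : (3/4*A + -j/12 - D)*(-j) = 3/4*(A*(-j)) + j^2/12 + D*j := by ring
      rw [keyeq]
      linarith [hexp, h1, h2, h3, h4, hAj]
    have hfin := le_of_mul_le_mul_right key hjpos
    linarith
end

section
/- (Shock case with nonpositive reconstructed average.) Let λ ∈ (0,1], μ ∈ ℝ, j < 0 and A ≤ 0 satisfy 2·|μ−1|·|A| ≤ −min(λ, 1−λ)·j. Define D := −λ·A/2 + ((μ²−1)/2)·A²/j + ((1−3λ²)/24)·j. Then j/24 ≤ D ≤ (3/4)·|A| + |j|/12. -/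
set_option maxHeartbeats 1000000


theorem stmt_2 (lam mu j A : ℝ)
    (hlam : lam ∈ Set.Ioc (0:ℝ) 1)
    (hj : j < 0) (hA : A ≤ 0)
    (hadm : 2 * |mu - 1| * |A| ≤ -(min lam (1 - lam)) * j)
    (D : ℝ)
    (hD : D = -(lam * A) / 2 + ((mu^2 - 1)/2) * A^2 / j + ((1 - 3 * lam^2)/24) * j) :
    j / 24 ≤ D ∧ D ≤ (3/4) * |A| + |j| / 12 := by
  obtain ⟨hl0, hl1⟩ := hlam
  have hj0 : j ≠ 0 := ne_of_lt hj
  set m := min lam (1 - lam) with hm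
  set e := |mu - 1| with he
  have he0 : 0 ≤ e := abs_nonneg _
  have he2 : e ^ 2 = (mu - 1) ^ 2 := sq_abs _
  have hAabs : |A| = -A := abs_of_nonpos hA
  have hjabs : |j| = -j := abs_of_neg hj
  have hm1 : m ≤ lam := min_le_left _ _
  have hm2 : m ≤ 1 - lam := min_le_right _ _
  have hm0 : 0 ≤ m := le_min hl0.le (by linarith)
  rw [hAabs] at hadm
  have hadm' : 2 * e * (-A) ≤ m * (-j) := by linarith [hadm]
  have hsq : (2 * e * (-A)) ^ 2 ≤ (m * (-j)) ^ 2 := by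
    have h1 : 0 ≤ 2 * e * (-A) := by nlinarith [he0]
    nlinarith [hadm']
  have hpabs : |(mu - 1) * A| = e * (-A) := by
    rw [abs_mul, hAabs, he]
  have hp_low : e * A ≤ (mu - 1) * A := by
    have := neg_abs_le ((mu - 1) * A)
    rw [hpabs] at this; linarith
  have hp_high : (mu - 1) * A ≤ e * (-A) := by
    have := le_abs_self ((mu - 1) * A)
    rw [hpabs] at this; linarith
  have hD' : D * j = -(lam * A) / 2 * j + ((mu ^ 2 - 1) / 2) * A ^ 2
      + ((1 - 3 * lam ^ 2) / 24) * j ^ 2 := by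
    rw [hD]; field_simp
  -- product bounds:  (mu-1)*A^2 = ((mu-1)*A)*A with A ≤ 0
  have hpA_high : (mu - 1) * A ^ 2 ≤ (e * (-A)) * (-A) := by
    nlinarith [mul_le_mul_of_nonpos_right hp_low hA]
  have hpA_low : -((e * (-A)) * (-A)) ≤ (mu - 1) * A ^ 2 := by
    nlinarith [mul_le_mul_of_nonpos_right hp_high hA]
  have hmj : m * (-j) ≤ lam * (-j) := by nlinarith [hm1]
  have heAj : (2 * e * (-A)) * (-A) ≤ (m * (-j)) * (-A) :=
    mul_le_mul_of_nonneg_right hadm' (by linarith)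
  have hjA : 0 ≤ j * A := by nlinarith [mul_nonneg (neg_nonneg.2 hj.le) (neg_nonneg.2 hA)]
  constructor
  · -- lower bound
    have h1 : D * j ≤ j ^ 2 / 24 := by
      rw [hD']
      nlinarith [hsq, hpA_high, heAj, hjA, hm1, sq_nonneg j, sq_nonneg A,
        mul_le_mul_of_nonneg_right hmj (by linarith : (0:ℝ) ≤ -A),
        mul_self_nonneg (m * (-j)), mul_self_nonneg (lam * (-j)),
        mul_le_mul_of_nonneg_right hmj hm0,
        mul_le_mul_of_nonneg_left hmj (by linarith : (0:ℝ) ≤ lam)]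
    by_contra h
    push_neg at h
    have h2 : (j / 24) * j < D * j := mul_lt_mul_of_neg_right h hj
    nlinarith [h1, h2]
  · -- upper bound
    rw [hAabs, hjabs]
    have h1 : ((3 / 4) * (-A) + (-j) / 12) * j ≤ D * j := by
      rw [hD']
      nlinarith [hpA_low, heAj, hjA, he2, sq_nonneg (e * A), sq_nonneg j,
        mul_le_mul_of_nonneg_right hjA (by linarith : (0:ℝ) ≤ 1 - lam),
        mul_nonneg (mul_nonneg (by linarith : (0:ℝ) ≤ 1 - lam) (by linarith : (0:ℝ) ≤ 1 + lam)) (sq_nonneg j),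
        mul_le_mul_of_nonneg_right hm2 hjA]
    by_contra h
    push_neg at h
    have h2 : D * j < ((3 / 4) * (-A) + (-j) / 12) * j := mul_lt_mul_of_neg_right h hj
    linarith
end

section
/- (Rarefaction case with positive reconstructed states.) Let λ ∈ (0,1], μ ∈ (0,2), and j, A ∈ ℝ satisfy 2·A > λ·j > 0 and 2·|μ−1|·A ≤ min(λ, 1−λ)·j. Define D := λ·A/2 + ((μ²−1)/2)·A²/j + ((1−3λ²)/24)·j. Then j/24 ≤ D ≤ (7/8)·A + j/24. -/
theorem stmt_3 (lam mu j A : ℝ)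
    (hlam : lam ∈ Set.Ioc (0:ℝ) 1)
    (hmu : mu ∈ Set.Ioo (0:ℝ) 2)
    (h1 : 2 * A > lam * j) (h2 : lam * j > 0)
    (hadm : 2 * |mu - 1| * A ≤ min lam (1 - lam) * j)
    (D : ℝ)
    (hD : D = lam * A / 2 + ((mu^2 - 1)/2) * A^2 / j + ((1 - 3 * lam^2)/24) * j) :
    j / 24 ≤ D ∧ D ≤ (7/8) * A + j / 24 := by
  obtain ⟨hl0, hl1⟩ := hlam
  obtain ⟨hm0, hm2⟩ := hmu
  have hj : 0 < j := by nlinarith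
  have hA : 0 < A := by nlinarith
  have hmin1 : min lam (1 - lam) ≤ lam := min_le_left _ _
  have hmin2 : min lam (1 - lam) ≤ 1 - lam := min_le_right _ _
  have hadm1 : 2 * |mu - 1| * A ≤ lam * j := le_trans hadm (by nlinarith)
  have hadm2 : 2 * |mu - 1| * A ≤ (1 - lam) * j := le_trans hadm (by nlinarith)
  have hDj : D * j = lam * A / 2 * j + ((mu^2 - 1)/2) * A^2 + ((1 - 3 * lam^2)/24) * j * j := by
    rw [hD]; field_simp
  clear hD hadm hmin1 hmin2
  refine ⟨(mul_le_mul_iff_of_pos_right hj).mp ?_, (mul_le_mul_iff_of_pos_right hj).mp ?_⟩ <;> rw [hDj] <;> clear hDj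
  · rcases le_total mu 1 with hm | hm
    · rw [abs_of_nonpos (by linarith)] at hadm1
      clear hadm2
      have key : (0:ℝ) ≤ (lam*j - 2*(1-mu)*A) * (2*(1+mu)*A - lam*j) := by
        apply mul_nonneg <;> nlinarith
      nlinarith [mul_pos hj hj]
    · clear hadm1 hadm2
      have key : (0:ℝ) < lam * j * (2 * A - lam * j) := mul_pos h2 (by linarith)
      nlinarith [mul_nonneg (mul_nonneg (sub_nonneg.mpr hm) (by linarith : (0:ℝ) ≤ mu + 1)) (sq_nonneg A)]
  · rcases le_total mu 1 with hm | hm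
    · clear hadm1 hadm2
      have hmsq : mu^2 ≤ 1 := by nlinarith
      have t1 : (mu^2 - 1)/2 * A^2 ≤ 0 := by nlinarith [mul_nonneg (by linarith : (0:ℝ) ≤ 1 - mu^2) (sq_nonneg A)]
      have t2 : lam * A / 2 * j ≤ A * j / 2 := by nlinarith [mul_pos hA hj]
      have t3 : (1 - 3 * lam^2)/24 * j * j ≤ j * j / 24 := by nlinarith [mul_pos hj hj, sq_nonneg (lam*j)]
      have t4 : 0 ≤ A * j := (mul_pos hA hj).le
      linarith
    · rw [abs_of_nonneg (by linarith)] at hadm1 hadm2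
      have key1 : (0:ℝ) ≤ (lam*j - 2*(mu-1)*A) * (lam*j + 2*(mu-1)*A) := by
        apply mul_nonneg <;> nlinarith
      have key2 : (0:ℝ) ≤ ((1-lam)*j - 2*(mu-1)*A) * (A*j) := by
        apply mul_nonneg
        · nlinarith
        · positivity
      nlinarith [mul_pos hA hj, mul_pos hj hj]
end

section
/- Let λ ∈ (0,1], μ ∈ (0,2) and χ > λ/2 satisfy 2·|μ−1|·χ ≤ min(λ, 1−λ). Then the quadratic g(χ) := ((μ²−1)/2)·χ² + (λ/2)·χ + (1−3λ²)/24 satisfies g(χ) ≥ 1/24. -/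
theorem stmt_6 (lam mu chi : ℝ)
    (hlam : lam ∈ Set.Ioc (0:ℝ) 1)
    (hmu : mu ∈ Set.Ioo (0:ℝ) 2)
    (hchi : chi > lam / 2)
    (hadm : 2 * |mu - 1| * chi ≤ min lam (1 - lam)) :
    ((mu^2 - 1)/2) * chi^2 + (lam/2) * chi + (1 - 3 * lam^2)/24 ≥ 1/24 := by
  obtain ⟨hl0, hl1⟩ := hlam
  obtain ⟨hm0, hm2⟩ := hmu
  rcases le_or_gt 1 mu with h1 | h1
  · nlinarith [mul_nonneg (show (0:ℝ) ≤ mu^2 - 1 by nlinarith) (sq_nonneg chi),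
      mul_pos hl0 (show (0:ℝ) < chi - lam/2 by linarith), sq_nonneg lam]
  · have habs : |mu - 1| = 1 - mu := by rw [abs_of_nonpos (by linarith)]; ring
    have h2 : 2 * (1 - mu) * chi ≤ lam := by
      have := le_trans hadm (min_le_left lam (1 - lam)); rw [habs] at this; linarith
    have key : (lam - 2*(1-mu)*chi) * (2*(1+mu)*chi - lam) ≥ 0 := by
      apply mul_nonneg <;> nlinarith
    nlinarith [key]
end

section
/- Let u_K, u_L ∈ ℝ with jump j := u_L − u_K ≠ 0, let g_K, g_L ∈ co{0, j} be minmod-admissible slopes, set r⁻ := u_K + g_K/2, r⁺ := u_L − g_L/2, and let D := (f^EC(u_K, u_L) − f^God(r⁻, r⁺)) / j. Let ν ≥ 0, let g ∈ co{0, j}, and let r ∈ ℝ with |r| ≤ max(|u_K|, |u_L|). Define D_σ := D + ν·r²·g/j. Then j/24 ≤ D_σ ≤ (1/12)·|j| + (7/8)·max(|u_K|, |u_L|) + ν·max(u_K², u_L²). Moreover, for any ĵ ≠ 0 and any ĝ ∈ co{0, ĵ}, the cross-coefficient D̂ := ν·r²·ĝ/ĵ satisfies 0 ≤ D̂ ≤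 ν·max(u_K², u_L²). -/
set_option maxHeartbeats 1000000

lemma ratio_mem (j : ℝ) (hjne : j ≠ 0) (g : ℝ)
    (hg : g ∈ Set.Icc (min 0 j) (max 0 j)) : 0 ≤ g / j ∧ g / j ≤ 1 := by
  obtain ⟨h1, h2⟩ := hg
  rcases lt_or_gt_of_ne hjne with hjn | hjp
  · rw [min_eq_right hjn.le] at h1
    rw [max_eq_left hjn.le] at h2
    have : g / j = (-g) / (-j) := by ring
    rw [this]
    constructor
    · exact div_nonneg (by linarith) (by linarith)
    · rw [div_le_one (by linarith)]; linarith
  · rw [min_eq_left hjp.le] at h1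
    rw [max_eq_right hjp.le] at h2
    exact ⟨div_nonneg h1 hjp.le, by rw [div_le_one hjp]; exact h2⟩

/-- Shock case: `rp ≤ s ≤ rm`. -/
lemma god_shock (uK uL m rm rp : ℝ)
    (huK1 : uK ≤ m) (huK2 : -m ≤ uK) (huL1 : uL ≤ m) (huL2 : -m ≤ uL)
    (h1 : (uK + uL)/2 ≤ rm) (h2 : rm ≤ uK) (h3 : uL ≤ rp) (h4 : rp ≤ (uK + uL)/2) :
    ((uK + uL)/2)^2/2 ≤ fGod rm rp ∧
      fGod rm rp - ((uK + uL)/2)^2/2 ≤ (uK - uL) * m / 2 := by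
  have hm0 : (0:ℝ) ≤ m := by linarith
  have hF : fGod rm rp = (1/2) * max ((max rm 0)^2) ((min rp 0)^2) := rfl
  constructor
  · rcases le_total 0 ((uK + uL)/2) with h | h
    · have e1 : max rm 0 = rm := max_eq_left (by linarith)
      have hAle : ((uK + uL)/2)^2 ≤ (max rm 0)^2 := by rw [e1]; nlinarith
      have := le_max_left ((max rm 0)^2) ((min rp 0)^2)
      rw [hF]; linarith
    · have e2 : min rp 0 = rp := min_eq_left (by linarith)
      have hBle : ((uK + uL)/2)^2 ≤ (min rp 0)^2 := by rw [e2]; nlinarith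
      have := le_max_right ((max rm 0)^2) ((min rp 0)^2)
      rw [hF]; linarith
  · have hA : (max rm 0)^2 ≤ ((uK + uL)/2)^2 + (uK - uL) * m := by
      rcases le_total rm 0 with h | h
      · rw [max_eq_right h]
        nlinarith [sq_nonneg ((uK + uL)/2)]
      · rw [max_eq_left h]
        rcases le_total 0 (rm + (uK + uL)/2) with h' | h'
        · nlinarith
        · nlinarith
    have hB : (min rp 0)^2 ≤ ((uK + uL)/2)^2 + (uK - uL) * m := by
      rcases le_total 0 rp with h | h
      · rw [min_eq_right h]
        nlinarith [sq_nonneg ((uK + uL)/2)]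
      · rw [min_eq_left h]
        rcases le_total (rp + (uK + uL)/2) 0 with h' | h'
        · nlinarith
        · nlinarith
    rw [hF]
    rcases max_cases ((max rm 0)^2) ((min rp 0)^2) with ⟨he, _⟩ | ⟨he, _⟩ <;>
      rw [he] <;> linarith

/-- Rarefaction case: `rm ≤ s ≤ rp`. -/
lemma god_rare (uK uL m rm rp : ℝ)
    (huK1 : uK ≤ m) (huK2 : -m ≤ uK) (huL1 : uL ≤ m) (huL2 : -m ≤ uL)
    (h1 : uK ≤ rm) (h2 : rm ≤ (uK + uL)/2) (h3 : (uK + uL)/2 ≤ rp) (h4 : rp ≤ uL) :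
    fGod rm rp ≤ ((uK + uL)/2)^2/2 ∧
      ((uK + uL)/2)^2/2 - fGod rm rp ≤ (uL - uK) * m / 2 := by
  have hm0 : (0:ℝ) ≤ m := by linarith
  have hF : fGod rm rp = (1/2) * max ((max rm 0)^2) ((min rp 0)^2) := rfl
  constructor
  · have hA : (max rm 0)^2 ≤ ((uK + uL)/2)^2 := by
      rcases le_total rm 0 with h | h
      · rw [max_eq_right h]; nlinarith [sq_nonneg ((uK + uL)/2)]
      · rw [max_eq_left h]; nlinarith
    have hB : (min rp 0)^2 ≤ ((uK + uL)/2)^2 := by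
      rcases le_total 0 rp with h | h
      · rw [min_eq_right h]; nlinarith [sq_nonneg ((uK + uL)/2)]
      · rw [min_eq_left h]; nlinarith
    rw [hF]
    rcases max_cases ((max rm 0)^2) ((min rp 0)^2) with ⟨he, _⟩ | ⟨he, _⟩ <;>
      rw [he] <;> linarith
  · rcases le_total 0 ((uK + uL)/2) with h | h
    · have hA : ((uK + uL)/2)^2 ≤ (max rm 0)^2 + (uL - uK) * m := by
        rcases le_total rm 0 with h' | h'
        · rw [max_eq_right h']; nlinarith
        · rw [max_eq_left h']; nlinarith
      have := le_max_left ((max rm 0)^2) ((min rp 0)^2)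
      rw [hF]; linarith
    · have hB : ((uK + uL)/2)^2 ≤ (min rp 0)^2 + (uL - uK) * m := by
        rcases le_total 0 rp with h' | h'
        · rw [min_eq_right h']; nlinarith
        · rw [min_eq_left h']; nlinarith
      have := le_max_right ((max rm 0)^2) ((min rp 0)^2)
      rw [hF]; linarith

theorem stmt_7 (uK uL j : ℝ) (hj : j = uL - uK) (hjne : j ≠ 0)
    (gK gL : ℝ)
    (hgK : gK ∈ Set.Icc (min 0 j) (max 0 j))
    (hgL : gL ∈ Set.Icc (min 0 j) (max 0 j))
    (rm rp : ℝ) (hrm : rm = uK + gK / 2) (hrp : rp = uL - gL / 2)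
    (D : ℝ) (hD : D = (fEC uK uL - fGod rm rp) / j)
    (ν : ℝ) (hν : 0 ≤ ν)
    (g : ℝ) (hg : g ∈ Set.Icc (min 0 j) (max 0 j))
    (r : ℝ) (hr : |r| ≤ max |uK| |uL|)
    (Dσ : ℝ) (hDσ : Dσ = D + ν * r^2 * g / j) :
    (j / 24 ≤ Dσ ∧
      Dσ ≤ (1/12) * |j| + (7/8) * max |uK| |uL| + ν * max (uK^2) (uL^2)) ∧
    ∀ jhat : ℝ, jhat ≠ 0 → ∀ ghat ∈ Set.Icc (min 0 jhat) (max 0 jhat),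
      0 ≤ ν * r^2 * ghat / jhat ∧ ν * r^2 * ghat / jhat ≤ ν * max (uK^2) (uL^2) := by
  set m := max |uK| |uL| with hm
  have hm0 : (0:ℝ) ≤ m := le_trans (abs_nonneg uK) (le_max_left _ _)
  have huK1 : uK ≤ m := le_trans (le_abs_self uK) (le_max_left _ _)
  have huK2 : -m ≤ uK := by linarith [neg_abs_le uK, le_max_left |uK| |uL|]
  have huL1 : uL ≤ m := le_trans (le_abs_self uL) (le_max_right _ _)
  have huL2 : -m ≤ uL := by linarith [neg_abs_le uL, le_max_right |uK| |uL|]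
  have hM : m ^ 2 = max (uK^2) (uL^2) := by
    rcases le_total |uK| |uL| with h | h
    · have h2 : uK^2 ≤ uL^2 := by nlinarith [sq_abs uK, sq_abs uL, abs_nonneg uK]
      rw [hm, max_eq_right h, max_eq_right h2, sq_abs]
    · have h2 : uL^2 ≤ uK^2 := by nlinarith [sq_abs uK, sq_abs uL, abs_nonneg uL]
      rw [hm, max_eq_left h, max_eq_left h2, sq_abs]
  have hr2 : r ^ 2 ≤ max (uK^2) (uL^2) := by
    rw [← hM]
    nlinarith [sq_abs r, abs_nonneg r]
  have hterm : ∀ jh : ℝ, jh ≠ 0 → ∀ gh ∈ Set.Icc (min 0 jh) (max 0 jh),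
      0 ≤ ν * r^2 * gh / jh ∧ ν * r^2 * gh / jh ≤ ν * max (uK^2) (uL^2) := by
    intro jh hjh gh hgh
    obtain ⟨hq0, hq1⟩ := ratio_mem jh hjh gh hgh
    have heq : ν * r^2 * gh / jh = ν * r^2 * (gh / jh) := by ring
    rw [heq]
    constructor
    · positivity
    · calc ν * r^2 * (gh / jh) ≤ ν * r^2 * 1 := by
            apply mul_le_mul_of_nonneg_left hq1 (by positivity)
        _ ≤ ν * max (uK^2) (uL^2) := by
            rw [mul_one]; exact mul_le_mul_of_nonneg_left hr2 hν
  have hDbnd : j / 24 ≤ D ∧ D ≤ j / 24 + m / 2 := by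
    have hEeq : fEC uK uL = ((uK + uL)/2)^2/2 + j^2/24 := by
      rw [fEC, hj]; ring
    obtain ⟨hgK1, hgK2⟩ := hgK
    obtain ⟨hgL1, hgL2⟩ := hgL
    rcases lt_or_gt_of_ne hjne with hjn | hjp
    · rw [min_eq_right hjn.le] at hgK1 hgL1
      rw [max_eq_left hjn.le] at hgK2 hgL2
      obtain ⟨hF1, hF2⟩ := god_shock uK uL m rm rp huK1 huK2 huL1 huL2
        (by rw [hrm]; linarith) (by rw [hrm]; linarith)
        (by rw [hrp]; linarith) (by rw [hrp]; linarith)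
      have h1 : D = j/24 + (fGod rm rp - ((uK + uL)/2)^2/2) / (-j) := by
        rw [hD, hEeq]; field_simp; ring
      constructor
      · rw [h1]
        have : 0 ≤ (fGod rm rp - ((uK + uL)/2)^2/2) / (-j) :=
          div_nonneg (by linarith) (by linarith)
        linarith
      · rw [h1]
        have : (fGod rm rp - ((uK + uL)/2)^2/2) / (-j) ≤ m / 2 := by
          rw [div_le_iff₀ (by linarith : (0:ℝ) < -j)]
          have : (uK - uL) * m / 2 = m / 2 * -j := by rw [hj]; ring
          linarith
        linarith
    · rw [min_eq_left hjp.le] at hgK1 hgL1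
      rw [max_eq_right hjp.le] at hgK2 hgL2
      obtain ⟨hF1, hF2⟩ := god_rare uK uL m rm rp huK1 huK2 huL1 huL2
        (by rw [hrm]; linarith) (by rw [hrm]; linarith)
        (by rw [hrp]; linarith) (by rw [hrp]; linarith)
      have h1 : D = j/24 + (((uK + uL)/2)^2/2 - fGod rm rp) / j := by
        rw [hD, hEeq]; field_simp; ring
      constructor
      · rw [h1]
        have : 0 ≤ (((uK + uL)/2)^2/2 - fGod rm rp) / j :=
          div_nonneg (by linarith) hjp.le
        linarith
      · rw [h1]
        have : (((uK + uL)/2)^2/2 - fGod rm rp) / j ≤ m / 2 := by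
          rw [div_le_iff₀ hjp]
          have : (uL - uK) * m / 2 = m / 2 * j := by rw [hj]; ring
          linarith
        linarith
  obtain ⟨ht0, ht1⟩ := hterm j hjne g hg
  refine ⟨⟨?_, ?_⟩, hterm⟩
  · rw [hDσ]; linarith [hDbnd.1]
  · rw [hDσ]
    have hja : j / 24 ≤ (1/12) * |j| := by
      rcases abs_cases j with ⟨h, _⟩ | ⟨h, _⟩ <;> rw [h] <;> linarith
    linarith [hDbnd.2]
end

section
/- Under the hypotheses of the GRP-coefficient bound (u_K, u_L ∈ ℝ, j := u_L − u_K ≠ 0, minmod-admissible slopes g_K, g_L ∈ co{0,j}, r⁻ := u_K + g_K/2, r⁺ := u_L − g_L/2, D := (f^EC(u_K,u_L) − f^God(r⁻,r⁺))/j, ν ≥ 0, g ∈ co{0,j}, |r| ≤ max(|u_K|,|u_L|), D_σ := D + ν·r²·g/j), let C₁ ∈ (0, 1/24] and define the stabilized coefficient D^New := D_σ + (1/24 + C₁)·|j| if j < 0, and D^New := D_σ if j > 0. Then C₁·|j| ≤ D^New ≤ (1/6)·|j| + (7/8)·max(|u_K|, |u_L|) + ν·max(u_K², u_L²). In particular the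 stabilized GRP flux is entropy stable. -/
lemma fGod_nonneg (a b : ℝ) : 0 ≤ fGod a b := by
  unfold fGod; positivity

lemma fGod_ge_left (a b : ℝ) (h : 0 ≤ a) : a^2/2 ≤ fGod a b := by
  unfold fGod
  rw [max_eq_left h]
  have := le_max_left (a^2) ((min b 0)^2)
  linarith

lemma fGod_ge_right (a b : ℝ) (h : b ≤ 0) : b^2/2 ≤ fGod a b := by
  unfold fGod
  rw [min_eq_left h]
  have := le_max_right ((max a 0)^2) (b^2)
  linarith

lemma fGod_le_mid (a b c : ℝ) (h1 : a ≤ c) (h2 : c ≤ b) : fGod a b ≤ c^2/2 := by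
  unfold fGod
  have ha : (max a 0)^2 ≤ c^2 := by
    rcases le_total a 0 with h | h
    · rw [max_eq_right h]; nlinarith [sq_nonneg c]
    · rw [max_eq_left h]; nlinarith
  have hb : (min b 0)^2 ≤ c^2 := by
    rcases le_total b 0 with h | h
    · rw [min_eq_left h]; nlinarith
    · rw [min_eq_right h]; nlinarith [sq_nonneg c]
  have := max_le ha hb
  linarith

lemma fGod_le_sq (a b M : ℝ) (ha : |a| ≤ M) (hb : |b| ≤ M) : fGod a b ≤ M^2/2 := by
  unfold fGod
  obtain ⟨ha1, ha2⟩ := abs_le.mp ha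
  obtain ⟨hb1, hb2⟩ := abs_le.mp hb
  have hM : 0 ≤ M := le_trans (abs_nonneg a) ha
  have h1 : (max a 0)^2 ≤ M^2 := by
    have h0 : 0 ≤ max a 0 := le_max_right a 0
    have h0' : max a 0 ≤ M := max_le ha2 hM
    nlinarith
  have h2 : (min b 0)^2 ≤ M^2 := by
    have h0 : min b 0 ≤ 0 := min_le_right b 0
    have h0' : -M ≤ min b 0 := le_min hb1 (by linarith)
    nlinarith
  have := max_le h1 h2
  linarith

set_option maxHeartbeats 1600000 in
theorem stmt_8 (uK uL j : ℝ) (hj : j = uL - uK) (hjne : j ≠ 0)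
    (gK gL : ℝ)
    (hgK : gK ∈ Set.Icc (min 0 j) (max 0 j))
    (hgL : gL ∈ Set.Icc (min 0 j) (max 0 j))
    (rm rp : ℝ) (hrm : rm = uK + gK / 2) (hrp : rp = uL - gL / 2)
    (D : ℝ) (hD : D = (fEC uK uL - fGod rm rp) / j)
    (ν : ℝ) (hν : 0 ≤ ν)
    (g : ℝ) (hg : g ∈ Set.Icc (min 0 j) (max 0 j))
    (r : ℝ) (hr : |r| ≤ max |uK| |uL|)
    (Dσ : ℝ) (hDσ : Dσ = D + ν * r^2 * g / j)
    (C₁ : ℝ) (hC₁ : C₁ ∈ Set.Ioc (0:ℝ) (1/24))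
    (DNew : ℝ)
    (hDNewNeg : j < 0 → DNew = Dσ + (1/24 + C₁) * |j|)
    (hDNewPos : 0 < j → DNew = Dσ) :
    C₁ * |j| ≤ DNew ∧
      DNew ≤ (1/6) * |j| + (7/8) * max |uK| |uL| + ν * max (uK^2) (uL^2) := by
  obtain ⟨hC1pos, hC1le⟩ := hC₁
  obtain ⟨hg1, hg2⟩ := hg
  obtain ⟨hgK1, hgK2⟩ := hgK
  obtain ⟨hgL1, hgL2⟩ := hgL
  have huL : uL = uK + j := by linarith
  subst huL
  obtain ⟨M, hMdef⟩ : ∃ x : ℝ, x = max |uK| |uK + j| := ⟨_, rfl⟩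
  rw [← hMdef] at hr ⊢
  have huKM := abs_le.mp (hMdef ▸ le_max_left |uK| |uK + j|)
  have huLM := abs_le.mp (hMdef ▸ le_max_right |uK| |uK + j|)
  have hMnn : 0 ≤ M := hMdef ▸ le_trans (abs_nonneg uK) (le_max_left _ _)
  obtain ⟨m, hmdef⟩ : ∃ x : ℝ, x = uK + j/2 := ⟨_, rfl⟩
  have hmabs : |m| ≤ M := abs_le.mpr ⟨by rw [hmdef]; linarith [huKM.1, huLM.1],
    by rw [hmdef]; linarith [huKM.2, huLM.2]⟩
  obtain ⟨hm1, hm2⟩ := abs_le.mp hmabs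
  have habsm := le_abs_self m
  have habsm' := neg_abs_le m
  have habsj := le_abs_self j
  have habsj' := neg_abs_le j
  have hMm : M ≤ |m| + |j|/2 := by
    rw [hMdef]
    have h1 : uK = m - j/2 := by rw [hmdef]; ring
    have h2 : uK + j = m + j/2 := by rw [hmdef]; ring
    apply max_le
    · exact abs_le.mpr ⟨by rw [h1]; linarith, by rw [h1]; linarith⟩
    · exact abs_le.mpr ⟨by rw [h2]; linarith, by rw [h2]; linarith⟩
  -- bound on r^2
  have hrM : r^2 ≤ M^2 := by
    have h1 := abs_nonneg r
    nlinarith [sq_abs r]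
  have hM2le : M^2 ≤ max (uK^2) ((uK+j)^2) := by
    rw [hMdef]
    rcases le_total |uK| |uK + j| with h | h
    · rw [max_eq_right h, sq_abs]
      exact le_max_right _ _
    · rw [max_eq_left h, sq_abs]
      exact le_max_left _ _
  have hfEC : fEC uK (uK + j) = m^2/2 + j^2/24 := by
    rw [hmdef]; simp only [fEC]; ring
  rcases hjne.lt_or_gt with hjneg | hjpos
  · -- j < 0
    have habsjeq : |j| = -j := abs_of_neg hjneg
    simp only [min_eq_right hjneg.le, max_eq_left hjneg.le] at hg1 hg2 hgK1 hgK2 hgL1 hgL2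
    -- viscosity term bounds
    have hgj0 : 0 ≤ g / j := by
      have hrw : g / j = (-g) / (-j) := by ring
      rw [hrw]
      exact div_nonneg (by linarith) (by linarith)
    have hgj1 : g / j ≤ 1 := by
      rw [div_le_one_iff]
      right; right; exact ⟨hjneg, hg1⟩
    have hν0 : 0 ≤ ν * r^2 * g / j := by
      rw [mul_div_assoc]
      exact mul_nonneg (mul_nonneg hν (sq_nonneg r)) hgj0
    have hν1 : ν * r^2 * g / j ≤ ν * max (uK^2) ((uK+j)^2) := by
      have h0 : ν * r^2 * (g/j) ≤ ν * r^2 * 1 :=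
        mul_le_mul_of_nonneg_left hgj1 (mul_nonneg hν (sq_nonneg r))
      have h1 : ν * r^2 ≤ ν * max (uK^2) ((uK+j)^2) :=
        mul_le_mul_of_nonneg_left (hrM.trans hM2le) hν
      rw [mul_div_assoc]
      linarith
    -- shock configuration: rp ≤ m ≤ rm, |rm| ≤ M, |rp| ≤ M
    have hrm1 : m ≤ rm := by rw [hrm, hmdef]; linarith
    have hrm2 : rm ≤ uK := by rw [hrm]; linarith
    have hrp1 : uK + j ≤ rp := by rw [hrp]; linarith
    have hrp2 : rp ≤ m := by rw [hrp, hmdef]; linarith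
    have hGlow : m^2/2 ≤ fGod rm rp := by
      rcases le_or_gt 0 m with h | h
      · have hf := fGod_ge_left rm rp (le_trans h hrm1)
        have hsq : m^2 ≤ rm^2 := pow_le_pow_left₀ h hrm1 2
        linarith
      · have hf := fGod_ge_right rm rp (by linarith : rp ≤ 0)
        have hsq : (-m)^2 ≤ (-rp)^2 :=
          pow_le_pow_left₀ (by linarith) (by linarith) 2
        rw [neg_sq, neg_sq] at hsq
        linarith
    have hGhigh : fGod rm rp ≤ M^2/2 :=
      fGod_le_sq rm rp M (abs_le.mpr ⟨by linarith, by linarith [huKM.2]⟩)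
        (abs_le.mpr ⟨by linarith [huLM.1], by linarith⟩)
    -- D bounds
    have hDlow : j/24 ≤ D := by
      rw [hD, le_div_iff_of_neg hjneg, hfEC]
      linarith [hGlow]
    have hDhigh : D ≤ -j/12 + (7/8)*M := by
      rw [hD, div_le_iff_of_neg hjneg, hfEC]
      have hMsq : M^2 - m^2 ≤ -j * M := by
        have h1 : (M - |m|) * (M + |m|) ≤ (-j/2) * (2*M) :=
          mul_le_mul (by rw [habsjeq] at hMm; linarith) (by linarith [abs_nonneg m])
            (by linarith [abs_nonneg m]) (by linarith)
        have h2 := sq_abs m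
        linarith [h1, h2]
      linarith [hMsq, hGhigh, mul_nonneg (by linarith : (0:ℝ) ≤ -j) hMnn, sq_nonneg j]
    have hc : C₁ * (-j) ≤ (1/24) * (-j) :=
      mul_le_mul_of_nonneg_right hC1le (by linarith)
    rw [hDNewNeg hjneg, hDσ, habsjeq]
    constructor
    · linarith [hDlow, hν0]
    · linarith [hDhigh, hν1, hc]
  · -- 0 < j
    have habsjeq : |j| = j := abs_of_pos hjpos
    simp only [min_eq_left hjpos.le, max_eq_right hjpos.le] at hg1 hg2 hgK1 hgK2 hgL1 hgL2
    have hgj0 : 0 ≤ g / j := div_nonneg hg1 hjpos.le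
    have hgj1 : g / j ≤ 1 := by
      rw [div_le_one hjpos]; exact hg2
    have hν0 : 0 ≤ ν * r^2 * g / j := by
      rw [mul_div_assoc]
      exact mul_nonneg (mul_nonneg hν (sq_nonneg r)) hgj0
    have hν1 : ν * r^2 * g / j ≤ ν * max (uK^2) ((uK+j)^2) := by
      have h0 : ν * r^2 * (g/j) ≤ ν * r^2 * 1 :=
        mul_le_mul_of_nonneg_left hgj1 (mul_nonneg hν (sq_nonneg r))
      have h1 : ν * r^2 ≤ ν * max (uK^2) ((uK+j)^2) :=
        mul_le_mul_of_nonneg_left (hrM.trans hM2le) hν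
      rw [mul_div_assoc]
      linarith
    -- rarefaction configuration: uK ≤ rm ≤ m ≤ rp ≤ uK + j
    have hrm1 : uK ≤ rm := by rw [hrm]; linarith
    have hrm2 : rm ≤ m := by rw [hrm, hmdef]; linarith
    have hrp1 : m ≤ rp := by rw [hrp, hmdef]; linarith
    have hrp2 : rp ≤ uK + j := by rw [hrp]; linarith
    have hGhigh : fGod rm rp ≤ m^2/2 := fGod_le_mid rm rp m hrm2 hrp1
    have hGlow : m^2/2 - j^2/8 - j*M/2 ≤ fGod rm rp := by
      rcases lt_or_ge 0 rm with h | h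
      · have hf := fGod_ge_left rm rp h.le
        have h1 : (m - rm) * (m + rm) ≤ (j/2) * (2*M) :=
          mul_le_mul (by linarith) (by linarith) (by linarith) (by linarith)
        linarith [hf, h1, sq_nonneg j]
      · rcases le_or_gt 0 rp with h2 | h2
        · have hf := fGod_nonneg rm rp
          have h1 : (0:ℝ) ≤ (j/2 - m) * (j/2 + m) :=
            mul_nonneg (by linarith) (by linarith)
          have h2' : (0:ℝ) ≤ j * M := mul_nonneg hjpos.le hMnn
          linarith [hf, h1, h2']
        · have hf := fGod_ge_right rm rp h2.le
          have h1 : (rp - m) * (-m - rp) ≤ (j/2) * (2*M) :=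
            mul_le_mul (by linarith) (by linarith) (by linarith) (by linarith)
          linarith [hf, h1, sq_nonneg j]
    have hDlow : C₁ * j ≤ D := by
      rw [hD, le_div_iff₀ hjpos, hfEC]
      have h1 : C₁ * j^2 ≤ (1/24) * j^2 :=
        mul_le_mul_of_nonneg_right hC1le (sq_nonneg j)
      linarith [hGhigh, h1]
    have hDhigh : D ≤ j/6 + M/2 := by
      rw [hD, div_le_iff₀ hjpos, hfEC]
      linarith [hGlow]
    rw [hDNewPos hjpos, hDσ, habsjeq]
    constructor
    · linarith [hDlow, hν0]
    · linarith [hDhigh, hν1, hMnn]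
end

section
/- Let r⁻, r⁺ ∈ ℝ, a := (r⁻ + r⁺)/2, j := r⁺ − r⁻. Then: (i) if (j < 0 and a > 0) or (0 < r⁻ ≤ r⁺), then f^EC(r⁻, r⁺) − f^God(r⁻, r⁺) = ((6a − j)/12)·j; (ii) if (j < 0 and a ≤ 0) or (r⁻ ≤ r⁺ < 0), then f^EC(r⁻, r⁺) − f^God(r⁻, r⁺) = (−(6a + j)/12)·j; (iii) if r⁻ ≤ 0 ≤ r⁺, then f^EC(r⁻, r⁺) − f^God(r⁻, r⁺) = (12a² + j²)/24. -/
theorem stmt_10 (rm rp a j : ℝ) (ha : a = (rm + rp)/2) (hj : j = rp - rm) :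
    (((j < 0 ∧ 0 < a) ∨ (0 < rm ∧ rm ≤ rp)) →
      fEC rm rp - fGod rm rp = ((6 * a - j)/12) * j) ∧
    (((j < 0 ∧ a ≤ 0) ∨ (rm ≤ rp ∧ rp < 0)) →
      fEC rm rp - fGod rm rp = (-(6 * a + j)/12) * j) ∧
    ((rm ≤ 0 ∧ 0 ≤ rp) →
      fEC rm rp - fGod rm rp = (12 * a^2 + j^2)/24) := by
  subst ha hj
  refine ⟨?_, ?_, ?_⟩
  · rintro (⟨hjneg, hapos⟩ | ⟨hrm, hle⟩)
    · have hrm : 0 < rm := by linarith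
      have h1 : max rm 0 = rm := max_eq_left hrm.le
      have h2 : (min rp 0)^2 ≤ rm^2 := by
        rcases le_or_gt 0 rp with h | h
        · rw [min_eq_right h] ; nlinarith
        · rw [min_eq_left h.le]; nlinarith
      simp only [fEC, fGod, h1, max_eq_left h2]
      ring
    · have h1 : max rm 0 = rm := max_eq_left hrm.le
      have h2 : min rp 0 = 0 := min_eq_right (by linarith)
      have h3 : (0:ℝ)^2 ≤ rm^2 := by nlinarith
      simp only [fEC, fGod, h1, h2, max_eq_left h3]
      ring
  · rintro (⟨hjneg, haneg⟩ | ⟨hle, hrp⟩)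
    · have hrp : rp < 0 := by linarith
      have h1 : min rp 0 = rp := min_eq_left hrp.le
      have h2 : (max rm 0)^2 ≤ rp^2 := by
        rcases le_or_gt rm 0 with h | h
        · rw [max_eq_right h]; nlinarith
        · rw [max_eq_left h.le]; nlinarith
      simp only [fEC, fGod, h1, max_eq_right h2]
      ring
    · have h1 : min rp 0 = rp := min_eq_left hrp.le
      have h2 : max rm 0 = 0 := max_eq_right (by linarith)
      have h3 : (0:ℝ)^2 ≤ rp^2 := by nlinarith
      simp only [fEC, fGod, h1, h2, max_eq_right h3]
      ring
  · rintro ⟨h1, h2⟩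
    simp only [fEC, fGod, max_eq_right h1, min_eq_right h2]
    norm_num
    ring
end

section
/- Let u_K, u_L ∈ ℝ with u_K > u_L, set j := u_L − u_K < 0, and choose the minmod-admissible slopes g_K = g_L = j (which lie in co{0, j}). Then the reconstructed interface values coincide, r⁻ = r⁺ = (u_K + u_L)/2, the Godunov flux of the reconstructed data equals f((u_K+u_L)/2), and the entropy-dissipation coefficient D := (f^EC(u_K, u_L) − f^God(r⁻, r⁺))/j equals j/24 < 0. In particular, the second-order finite volume flux based on the Riemann-problem solver with minmod reconstruction is not entropy stable. -/
lemma fGod_diag (m : ℝ) : fGod m m = m^2 / 2 := by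
  unfold fGod
  rcases le_or_gt 0 m with h | h
  · rw [max_eq_left h, min_eq_right h]
    rw [max_eq_left (by simpa using sq_nonneg m)]
    ring
  · rw [max_eq_right h.le, min_eq_left h.le]
    rw [max_eq_right (by simpa using sq_nonneg m)]
    ring

theorem stmt_14 (uK uL j : ℝ) (huKL : uK > uL) (hj : j = uL - uK)
    (gK gL : ℝ) (hgK : gK = j) (hgL : gL = j)
    (rm rp : ℝ) (hrm : rm = uK + gK / 2) (hrp : rp = uL - gL / 2)
    (D : ℝ) (hD : D = (fEC uK uL - fGod rm rp) / j) :
    gK ∈ Set.Icc (min 0 j) (max 0 j) ∧ gL ∈ Set.Icc (min 0 j) (max 0 j) ∧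
    rm = (uK + uL)/2 ∧ rp = (uK + uL)/2 ∧
    fGod rm rp = ((uK + uL)/2)^2 / 2 ∧
    D = j / 24 ∧ D < 0 := by
  have hjneg : j < 0 := by rw [hj]; linarith
  have hrm' : rm = (uK + uL)/2 := by rw [hrm, hgK, hj]; ring
  have hrp' : rp = (uK + uL)/2 := by rw [hrp, hgL, hj]; ring
  have hG : fGod rm rp = ((uK + uL)/2)^2 / 2 := by
    rw [hrm', hrp']; exact fGod_diag _
  have hDval : D = j / 24 := by
    rw [hD, hG]
    unfold fEC
    rw [div_eq_iff (ne_of_lt hjneg)]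
    rw [hj]; ring
  exact ⟨⟨hgK ▸ min_le_right 0 j, hgK ▸ le_max_right 0 j⟩,
    ⟨hgL ▸ min_le_right 0 j, hgL ▸ le_max_right 0 j⟩,
    hrm', hrp', hG, hDval, by rw [hDval]; linarith⟩
end

section
/- Let Δt > 0, n ∈ ℕ, t_k := k·Δt for k ∈ ℕ, and let τ ∈ [t_n, t_{n+1}). Let r : ℕ → ℝ, and let r_h : ℝ → ℝ be the piecewise constant function with r_h(t) = r_k for t ∈ [t_k, t_{k+1}), k ≥ 0. Let φ : ℝ → ℝ be continuously differentiable. With the forward difference operator D_t v(t) := (v(t + Δt) − v(t))/Δt, the following identity holds: φ(τ)·r_n − φ(0)·r_0 − ∫₀^{t_n} (φ(t)·D_t r_h(t) + r_h(t)·φ'(t)) dt = ∫₀^{t_n} ((φ(t) − φ(t − Δt))/Δt − φ'(t))·r_h(t) dt + ∫_{t_n}^{t_{n+1}} r_n·(φ(τ) − φ(t − Δt))/Δt dt − ∫₀^{Δt} r_0·(φ(0) − φ(t − Δt))/Δt dt. -/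
open intervalIntegral MeasureTheory

lemma my_chain {f : ℝ → ℝ} {Δt : ℝ}
    (h : ∀ k : ℕ, IntervalIntegrable f volume ((k:ℝ)*Δt) (((k:ℝ)+1)*Δt)) :
    ∀ m : ℕ, IntervalIntegrable f volume 0 ((m:ℝ)*Δt) := by
  intro m
  induction m with
  | zero => simp
  | succ m ih =>
      have : ((m:ℝ)+1)*Δt = (((m+1:ℕ)):ℝ)*Δt := by push_cast; ring
      exact this ▸ ih.trans (h m)

theorem stmt_18 (Δt : ℝ) (hΔt : 0 < Δt) (n : ℕ)
    (τ : ℝ) (hτ : τ ∈ Set.Ico ((n : ℝ) * Δt) (((n : ℝ) + 1) * Δt))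
    (r : ℕ → ℝ) (rh : ℝ → ℝ)
    (hrh : ∀ k : ℕ, ∀ t ∈ Set.Ico ((k : ℝ) * Δt) (((k : ℝ) + 1) * Δt), rh t = r k)
    (φ : ℝ → ℝ) (hφ : ContDiff ℝ 1 φ) :
    φ τ * r n - φ 0 * r 0
        - ∫ t in (0:ℝ)..((n : ℝ) * Δt),
            (φ t * ((rh (t + Δt) - rh t) / Δt) + rh t * deriv φ t)
      = (∫ t in (0:ℝ)..((n : ℝ) * Δt),
            ((φ t - φ (t - Δt)) / Δt - deriv φ t) * rh t)
        + (∫ t in ((n : ℝ) * Δt)..(((n : ℝ) + 1) * Δt),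
            r n * ((φ τ - φ (t - Δt)) / Δt))
        - ∫ t in (0:ℝ)..Δt, r 0 * ((φ 0 - φ (t - Δt)) / Δt) := by
  have hc : Continuous φ := hφ.continuous
  have hc' : Continuous (deriv φ) := hφ.continuous_deriv le_rfl
  have hle : ∀ k : ℕ, (k:ℝ)*Δt ≤ ((k:ℝ)+1)*Δt := by
    intro k; nlinarith [hΔt]
  -- a.e. piecewise values
  have hae : ∀ k : ℕ, ∀ᵐ t ∂(volume : Measure ℝ),
      t ∈ Set.uIoc ((k:ℝ)*Δt) (((k:ℝ)+1)*Δt) → rh t = r k ∧ rh (t+Δt) = r (k+1) := by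
    intro k
    have hne : ∀ᵐ t ∂(volume : Measure ℝ), t ≠ ((k:ℝ)+1)*Δt := by
      rw [ae_iff]
      simp only [not_not]
      simpa using Real.volume_singleton (a := ((k:ℝ)+1)*Δt)
    filter_upwards [hne] with t ht htmem
    rw [Set.uIoc_of_le (hle k)] at htmem
    have ht2 : t < ((k:ℝ)+1)*Δt := lt_of_le_of_ne htmem.2 ht
    constructor
    · exact hrh k t ⟨htmem.1.le, ht2⟩
    · have := hrh (k+1) (t+Δt) (by push_cast; constructor <;> nlinarith [htmem.1])
      simpa using this
  -- integrability pieces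
  set f1 : ℝ → ℝ := fun t => φ t * ((rh (t + Δt) - rh t) / Δt) + rh t * deriv φ t with hf1
  set f2 : ℝ → ℝ := fun t => ((φ t - φ (t - Δt)) / Δt - deriv φ t) * rh t with hf2
  set g : ℝ → ℝ := fun t => φ t * rh (t+Δt) - φ (t-Δt) * rh t with hg
  have hφint : ∀ a b : ℝ, IntervalIntegrable (fun t => φ (t - Δt)) volume a b :=
    fun a b => (hc.comp (continuous_id.sub continuous_const)).intervalIntegrable a b
  have hint1 : ∀ k : ℕ, IntervalIntegrable f1 volume ((k:ℝ)*Δt) (((k:ℝ)+1)*Δt) := by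
    intro k
    refine IntervalIntegrable.congr_ae
      (f := fun t => φ t * ((r (k+1) - r k) / Δt) + r k * deriv φ t) ?_ ?_
    · exact ((hc.mul continuous_const).add (continuous_const.mul hc')).intervalIntegrable _ _
    · refine (ae_restrict_iff' measurableSet_uIoc).mpr ?_
      filter_upwards [hae k] with t ht htmem
      obtain ⟨h1, h2⟩ := ht htmem
      simp [hf1, h1, h2]
  have hint2 : ∀ k : ℕ, IntervalIntegrable f2 volume ((k:ℝ)*Δt) (((k:ℝ)+1)*Δt) := by
    intro k
    refine IntervalIntegrable.congr_ae
      (f := fun t => ((φ t - φ (t - Δt)) / Δt - deriv φ t) * r k) ?_ ?_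
    · exact ((((hc.sub (hc.comp (continuous_id.sub continuous_const))).div_const _).sub hc').mul
        continuous_const).intervalIntegrable _ _
    · refine (ae_restrict_iff' measurableSet_uIoc).mpr ?_
      filter_upwards [hae k] with t ht htmem
      obtain ⟨h1, _⟩ := ht htmem
      simp [hf2, h1]
  have hintg : ∀ k : ℕ, IntervalIntegrable g volume ((k:ℝ)*Δt) (((k:ℝ)+1)*Δt) := by
    intro k
    refine IntervalIntegrable.congr_ae
      (f := fun t => φ t * r (k+1) - φ (t - Δt) * r k) ?_ ?_
    · exact ((hc.mul continuous_const).sub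
        ((hc.comp (continuous_id.sub continuous_const)).mul continuous_const)).intervalIntegrable _ _
    · refine (ae_restrict_iff' measurableSet_uIoc).mpr ?_
      filter_upwards [hae k] with t ht htmem
      obtain ⟨h1, h2⟩ := ht htmem
      simp [hg, h1, h2]
  -- key telescoping identity
  have key : ∀ m : ℕ, (∫ t in (0:ℝ)..((m:ℝ)*Δt), g t)
      = r m * (∫ t in ((m:ℝ)*Δt)..(((m:ℝ)+1)*Δt), φ (t - Δt))
        - r 0 * ∫ t in (0:ℝ)..Δt, φ (t - Δt) := by
    intro m
    induction m with
    | zero => simp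
    | succ m ih =>
        have hsplit : (∫ t in (0:ℝ)..(((m+1:ℕ)):ℝ)*Δt, g t)
            = (∫ t in (0:ℝ)..((m:ℝ)*Δt), g t)
              + ∫ t in ((m:ℝ)*Δt)..(((m:ℝ)+1)*Δt), g t := by
          have hcast : (((m+1:ℕ)):ℝ)*Δt = ((m:ℝ)+1)*Δt := by push_cast; ring
          rw [hcast]
          exact (intervalIntegral.integral_add_adjacent_intervals
            (my_chain hintg m) (hintg m)).symm
        have hseg : (∫ t in ((m:ℝ)*Δt)..(((m:ℝ)+1)*Δt), g t)
            = r (m+1) * (∫ t in ((m:ℝ)*Δt)..(((m:ℝ)+1)*Δt), φ t)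
              - r m * ∫ t in ((m:ℝ)*Δt)..(((m:ℝ)+1)*Δt), φ (t - Δt) := by
          rw [intervalIntegral.integral_congr_ae (g := fun t => φ t * r (m+1) - φ (t-Δt) * r m)
            (by filter_upwards [hae m] with t ht htmem
                obtain ⟨h1, h2⟩ := ht htmem
                simp [hg, h1, h2]),
            intervalIntegral.integral_sub
              ((hc.intervalIntegrable _ _).mul_const _)
              ((hφint _ _).mul_const _),
            intervalIntegral.integral_mul_const, intervalIntegral.integral_mul_const]
          ring
        have hshift : (∫ t in ((m:ℝ)*Δt)..(((m:ℝ)+1)*Δt), φ t)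
            = ∫ t in (((m+1:ℕ)):ℝ)*Δt..((((m+1:ℕ)):ℝ)+1)*Δt, φ (t - Δt) := by
          rw [intervalIntegral.integral_comp_sub_right (f := φ) (d := Δt)]
          congr 1 <;> push_cast <;> ring
        rw [hsplit, ih, hseg, hshift]
        push_cast
        ring
  -- combine the two big integrals
  have hcomb : (∫ t in (0:ℝ)..((n:ℝ)*Δt), f1 t) + (∫ t in (0:ℝ)..((n:ℝ)*Δt), f2 t)
      = (∫ t in (0:ℝ)..((n:ℝ)*Δt), g t) / Δt := by
    rw [← intervalIntegral.integral_add (my_chain hint1 n) (my_chain hint2 n),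
      ← intervalIntegral.integral_div]
    apply intervalIntegral.integral_congr
    intro t _
    simp only [hf1, hf2, hg, Pi.add_apply]
    field_simp
    ring
  -- evaluate the two boundary integrals
  have hI3 : (∫ t in ((n:ℝ)*Δt)..(((n:ℝ)+1)*Δt), r n * ((φ τ - φ (t - Δt)) / Δt))
      = r n * φ τ - r n / Δt * ∫ t in ((n:ℝ)*Δt)..(((n:ℝ)+1)*Δt), φ (t - Δt) := by
    rw [intervalIntegral.integral_const_mul]
    rw [show (fun t => (φ τ - φ (t - Δt)) / Δt) = fun t => (φ τ - φ (t - Δt)) / Δt from rfl]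
    simp only [div_eq_mul_inv, ← sub_mul]
    rw [intervalIntegral.integral_mul_const,
      intervalIntegral.integral_sub (intervalIntegrable_const) (hφint _ _),
      intervalIntegral.integral_const]
    have : ((n:ℝ)+1)*Δt - (n:ℝ)*Δt = Δt := by ring
    rw [this]
    field_simp
    ring
  have hI4 : (∫ t in (0:ℝ)..Δt, r 0 * ((φ 0 - φ (t - Δt)) / Δt))
      = r 0 * φ 0 - r 0 / Δt * ∫ t in (0:ℝ)..Δt, φ (t - Δt) := by
    rw [intervalIntegral.integral_const_mul]
    simp only [div_eq_mul_inv, ← sub_mul]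
    rw [intervalIntegral.integral_mul_const,
      intervalIntegral.integral_sub (intervalIntegrable_const) (hφint _ _),
      intervalIntegral.integral_const]
    simp only [sub_zero]
    field_simp
    ring
  have hkey := key n
  rw [hI3, hI4]
  have h' : (∫ t in (0:ℝ)..((n:ℝ)*Δt), f1 t) + (∫ t in (0:ℝ)..((n:ℝ)*Δt), f2 t)
      = r n * (∫ t in ((n:ℝ)*Δt)..(((n:ℝ)+1)*Δt), φ (t - Δt)) / Δt
        - r 0 * (∫ t in (0:ℝ)..Δt, φ (t - Δt)) / Δt := by
    rw [hcomb, hkey]; ring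
  have hne : Δt ≠ 0 := ne_of_gt hΔt
  field_simp at h' ⊢
  linarith [h']
end
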